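/- arXiv:2501.16680 — 5 statements merged into one kernel-verified Lean document; each statement's English description precedes it below -/
import Mathlib

section
/- Let U be a nonempty finite type and E any type. Let M : Finset U → PMF E be a mechanism that is (ε,δ)-differentially private, and let dec : E → U → Bool be a decoder such that (M, dec) has error probability at most α, where ε ≥ 0, 0 ≤ δ ≤ 1 and 0 < α ≤ 1/2. Then ε ≥ ln((1 − α − δ)/α). -/
/-- `M` is `(ε,δ)`-differentially private: for all sets whose symmetric difference
has exactly one element, and every output event `R`, the probability under `M S`
is at most `e^ε` times that under `M S'`, plus `δ`. -/
def IsDP {U E : Type*} [DecidableEq U] (M : Finset U → PMF E) (ε δ : ℝ) : Prop :=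
  ∀ S S' : Finset U, (symmDiff S S').card = 1 → ∀ R : Set E,
    (M S).toOuterMeasure R ≤
      ENNReal.ofReal (Real.exp ε) * (M S').toOuterMeasure R + ENNReal.ofReal δ

/-- `(M, dec)` has error probability at most `α`: for every input set `S` and every
query `q`, the probability over `z ∼ M S` that `dec z q` differs from the indicator
of `q ∈ S` is at most `α`. -/
def HasErrorProb {U E : Type*} [DecidableEq U] (M : Finset U → PMF E)
    (dec : E → U → Bool) (α : ℝ) : Prop :=
  ∀ (S : Finset U) (q : U),
    (M S).toOuterMeasure {z | dec z q ≠ decide (q ∈ S)} ≤ ENNReal.ofReal α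

theorem privacy_utility_epsilon_lower_bound
    {U E : Type*} [Fintype U] [Nonempty U] [DecidableEq U]
    (M : Finset U → PMF E) (dec : E → U → Bool) (ε δ α : ℝ)
    (hε : 0 ≤ ε) (hδ0 : 0 ≤ δ) (hδ1 : δ ≤ 1) (hα0 : 0 < α) (hα : α ≤ 1 / 2)
    (hDP : IsDP M ε δ) (hErr : HasErrorProb M dec α) :
    ε ≥ Real.log ((1 - α - δ) / α) := by
  obtain ⟨q⟩ := (inferInstance : Nonempty U)
  set R : Set E := {z | dec z q = true} with hR
  have hsd : (symmDiff ({q} : Finset U) ∅).card = 1 := by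
    rw [show (∅ : Finset U) = ⊥ from rfl, symmDiff_bot]; simp
  have hDP1 := hDP {q} ∅ hsd R
  have h1 : (M {q}).toOuterMeasure Rᶜ ≤ ENNReal.ofReal α := by
    have := hErr {q} q
    simpa [R, Set.compl_setOf] using this
  have h0 : (M ∅).toOuterMeasure R ≤ ENNReal.ofReal α := by
    have := hErr ∅ q
    simpa [R] using this
  have huniv : (M {q}).toOuterMeasure Set.univ = 1 :=
    (PMF.toOuterMeasure_apply_eq_one_iff _ _).2 (Set.subset_univ _)
  have hsplit : (1 : ENNReal) ≤ (M {q}).toOuterMeasure R + (M {q}).toOuterMeasure Rᶜ := by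
    rw [← huniv]
    have := MeasureTheory.measure_union_le (μ := (M {q}).toOuterMeasure) R Rᶜ
    simpa using this
  have key : (1 : ENNReal) ≤ ENNReal.ofReal (Real.exp ε * α + δ + α) := by
    calc (1 : ENNReal) ≤ (M {q}).toOuterMeasure R + (M {q}).toOuterMeasure Rᶜ := hsplit
      _ ≤ (ENNReal.ofReal (Real.exp ε) * (M ∅).toOuterMeasure R + ENNReal.ofReal δ)
            + ENNReal.ofReal α := add_le_add hDP1 h1
      _ ≤ (ENNReal.ofReal (Real.exp ε) * ENNReal.ofReal α + ENNReal.ofReal δ)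
            + ENNReal.ofReal α := by gcongr
      _ = ENNReal.ofReal (Real.exp ε * α + δ + α) := by
          rw [← ENNReal.ofReal_mul (Real.exp_nonneg ε), ← ENNReal.ofReal_add (by positivity) hδ0,
            ← ENNReal.ofReal_add (by positivity) hα0.le]
  have hreal : (1 : ℝ) ≤ Real.exp ε * α + δ + α := by
    rw [show (1 : ENNReal) = ENNReal.ofReal 1 by simp] at key
    exact (ENNReal.ofReal_le_ofReal_iff (by positivity)).1 key
  have hratio : (1 - α - δ) / α ≤ Real.exp ε := by
    rw [div_le_iff₀ hα0]
    linarith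
  rcases le_or_gt ((1 - α - δ) / α) 0 with h | h
  · have habs : |(1 - α - δ) / α| ≤ 1 := by
      refine abs_le.2 ⟨?_, by linarith⟩
      rw [le_div_iff₀ hα0]; linarith
    calc Real.log ((1 - α - δ) / α) = Real.log |(1 - α - δ) / α| := (Real.log_abs _).symm
      _ ≤ 0 := Real.log_nonpos (abs_nonneg _) habs
      _ ≤ ε := hε
  · exact (Real.log_le_iff_le_exp h).2 hratio
end

section
/- Let U and F be nonempty finite types, let S : Finset U, let u ∈ U with u ∉ S, and let g : (U → F) → F be a function that depends only on the restriction to S, i.e., g h = g h' whenever h s = h' s for all s ∈ S. If h is drawn uniformly at random from all functions U → F, then the probability that h u = g h equals 1/|F|. -/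
theorem uniform_hash_matches_local_function
    {U F : Type*} [Fintype U] [DecidableEq U] [Nonempty U] [Fintype F] [Nonempty F]
    (S : Finset U) (u : U) (hu : u ∉ S)
    (g : (U → F) → F)
    (hg : ∀ h h' : U → F, (∀ s ∈ S, h s = h' s) → g h = g h') :
    (PMF.uniformOfFintype (U → F)).toOuterMeasure {h : U → F | h u = g h} =
      1 / (Fintype.card F : ENNReal) := by
  classical
  have hgu : ∀ (h : U → F) (x : F), g (Function.update h u x) = g h := by
    intro h x
    exact hg _ _ fun s hs => Function.update_of_ne (fun he => hu (by rw [← he]; exact hs)) _ _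
  have e : (U → F) ≃ {h : U → F // h u = g h} × F :=
    { toFun := fun h => (⟨Function.update h u (g h), by
        simp [hgu]⟩, h u)
      invFun := fun p => Function.update p.1.1 u p.2
      left_inv := fun h => by
        simp [Function.update_idem]
      right_inv := fun p => by
        ext
        · simp only [Function.update_idem]
          rw [hgu, ← p.1.2, Function.update_eq_self]
        · simp }
  have hcard : Fintype.card (U → F) =
      Fintype.card {h : U → F // h u = g h} * Fintype.card F := by
    rw [Fintype.card_congr e, Fintype.card_prod]
  rw [PMF.toOuterMeasure_uniformOfFintype_apply]
  have hF : (Fintype.card F : ENNReal) ≠ 0 := by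
    exact_mod_cast Fintype.card_ne_zero
  have hne : Nonempty {h : U → F // h u = g h} := ⟨(e (Classical.arbitrary _)).1⟩
  have hs : (Fintype.card {h : U → F | h u = g h} : ENNReal) ≠ 0 := by
    exact_mod_cast Fintype.card_ne_zero (α := {h : U → F // h u = g h})
  have hstop : (Fintype.card {h : U → F | h u = g h} : ENNReal) ≠ ⊤ := by
    simp
  have hcard' : (Fintype.card (U → F) : ENNReal) =
      (Fintype.card {h : U → F | h u = g h} : ENNReal) * Fintype.card F := by
    exact_mod_cast hcard
  rw [hcard', ← mul_one ((Fintype.card {h : U → F | h u = g h} : ENNReal)),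
    mul_assoc, one_mul, ENNReal.mul_div_mul_left _ _ hs hstop]
end

section
/- Let U and F be nonempty finite types, let S : Finset U, let Q : Finset U be disjoint from S, and for each q ∈ U let g q : (U → F) → F be a function that depends only on the restriction to S, i.e., g q h = g q h' whenever h s = h' s for all s ∈ S. If h is drawn uniformly at random from all functions U → F, then the probability that h q = g q h holds simultaneously for all q ∈ Q equals (1/|F|)^{|Q|}. -/
theorem uniform_hash_matches_local_functions_indep
    {U F : Type*} [Fintype U] [DecidableEq U] [Nonempty U] [Fintype F] [Nonempty F]
    (S Q : Finset U) (hQ : Disjoint Q S)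
    (g : U → (U → F) → F)
    (hg : ∀ (q : U) (h h' : U → F), (∀ s ∈ S, h s = h' s) → g q h = g q h') :
    (PMF.uniformOfFintype (U → F)).toOuterMeasure {h : U → F | ∀ q ∈ Q, h q = g q h} =
      (1 / (Fintype.card F : ENNReal)) ^ Q.card := by
  classical
  set A : Set (U → F) := {h : U → F | ∀ q ∈ Q, h q = g q h} with hA
  -- bijection
  have key : ∀ (h : {u : U // u ∉ Q} → F) (q : U), q ∈ Q →
      (fun u => if hu : u ∈ Q then
        g u (fun v => if hv : v ∈ Q then Classical.arbitrary F else h ⟨v, hv⟩)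
        else h ⟨u, hu⟩) q
      = g q (fun u => if hu : u ∈ Q then
        g u (fun v => if hv : v ∈ Q then Classical.arbitrary F else h ⟨v, hv⟩)
        else h ⟨u, hu⟩) := by
    intro h q hq
    set h0 : U → F := fun v => if hv : v ∈ Q then Classical.arbitrary F else h ⟨v, hv⟩
    set h1 : U → F := fun u => if hu : u ∈ Q then g u h0 else h ⟨u, hu⟩
    have hagree : ∀ s ∈ S, h1 s = h0 s := by
      intro s hs
      have hsQ : s ∉ Q := Finset.disjoint_right.mp hQ hs
      simp [h0, h1, hsQ]
    calc h1 q = g q h0 := by simp [h1, hq]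
    _ = g q h1 := (hg q h1 h0 hagree).symm
  let e : A ≃ ({u : U // u ∉ Q} → F) :=
  { toFun := fun h u => h.1 u.1
    invFun := fun h => ⟨fun u => if hu : u ∈ Q then
        g u (fun v => if hv : v ∈ Q then Classical.arbitrary F else h ⟨v, hv⟩)
        else h ⟨u, hu⟩, key h⟩
    left_inv := by
      rintro ⟨h, hh⟩
      ext u
      by_cases hu : u ∈ Q
      · simp only [dif_pos hu]
        have : g u (fun v => if hv : v ∈ Q then Classical.arbitrary F else h v)
            = g u h := by
          apply hg
          intro s hs
          have hsQ : s ∉ Q := Finset.disjoint_right.mp hQ hs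
          simp [hsQ]
        rw [this, (hh u hu).symm]
      · simp [dif_neg hu]
    right_inv := by
      intro h
      funext u
      simp [dif_neg u.2] }
  have hcardA : Nat.card A = Fintype.card F ^ (Fintype.card U - Q.card) := by
    rw [Nat.card_congr e]
    simp [Nat.card_eq_fintype_card, Fintype.card_fun, Fintype.card_subtype_compl]
  have hQle : Q.card ≤ Fintype.card U := Q.card_le_univ
  rw [PMF.toOuterMeasure_apply, ← tsum_subtype]
  have hval : ∀ x : A, (PMF.uniformOfFintype (U → F)) x = (Fintype.card (U → F) : ENNReal)⁻¹ := by
    intro x; simp [PMF.uniformOfFintype_apply]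
  haveI : Fintype ↑A := Fintype.ofFinite _
  rw [tsum_congr hval, tsum_fintype, Finset.sum_const, Finset.card_univ,
    ← Nat.card_eq_fintype_card, hcardA]
  have hcF : (Fintype.card F : ENNReal) ≠ 0 := by
    exact_mod_cast Nat.cast_ne_zero.mpr Fintype.card_ne_zero
  have hcFtop : (Fintype.card F : ENNReal) ≠ ⊤ := ENNReal.natCast_ne_top _
  rw [nsmul_eq_mul, one_div, Fintype.card_fun]
  push_cast
  have hsplit : Fintype.card U = (Fintype.card U - Q.card) + Q.card := (Nat.sub_add_cancel hQle).symm
  rw [show (Fintype.card F : ENNReal) ^ Fintype.card U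
      = (Fintype.card F : ENNReal) ^ (Fintype.card U - Q.card) * (Fintype.card F : ENNReal) ^ Q.card by
    rw [← pow_add, ← hsplit]]
  rw [ENNReal.mul_inv (Or.inl (pow_ne_zero _ hcF)) (Or.inl (ENNReal.pow_ne_top hcFtop)),
    ← mul_assoc, ENNReal.mul_inv_cancel (pow_ne_zero _ hcF) (ENNReal.pow_ne_top hcFtop), one_mul,
    ENNReal.inv_pow]
end

section
/- Let U be a type with decidable equality, Ω any type, and let 0 ≤ p ≤ 1. Let sub : Finset U → PMF (Finset U) be the p-subsampling distribution, let K : Finset U → PMF Ω, let S : Finset U and u ∈ U with u ∉ S. Then for every v ∈ Ω, ((sub (insert u S)).bind K) v = p · ((sub S).bind K) v + (1−p) · ((sub S).bind (fun T => K (insert u T))) v. -/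
/-- `sub` is the `p`-subsampling distribution: on input `S` it outputs `T ⊆ S`
with probability `(1-p)^|T| · p^(|S|-|T|)` (each element of `S` is kept
independently with probability `1-p`). -/
def IsSubsample {U : Type*} [DecidableEq U] (p : ℝ) (sub : Finset U → PMF (Finset U)) : Prop :=
  ∀ S T : Finset U,
    sub S T = if T ⊆ S then ENNReal.ofReal ((1 - p) ^ T.card * p ^ (S.card - T.card)) else 0

theorem subsample_insert_decomposition
    {U Ω : Type*} [DecidableEq U]
    (p : ℝ) (hp0 : 0 ≤ p) (hp1 : p ≤ 1)
    (sub : Finset U → PMF (Finset U)) (hsub : IsSubsample p sub)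
    (K : Finset U → PMF Ω) (S : Finset U) (u : U) (hu : u ∉ S) :
    ∀ v : Ω,
      ((sub (insert u S)).bind K) v =
        ENNReal.ofReal p * ((sub S).bind K) v +
          ENNReal.ofReal (1 - p) * ((sub S).bind (fun T => K (insert u T))) v := by
  intro v
  simp only [PMF.bind_apply]
  have hz : ∀ (A : Finset U) (f : Finset U → Ω → ENNReal),
      ∑' T, sub A T * f T v = ∑ T ∈ A.powerset, sub A T * f T v := by
    intro A f
    apply tsum_eq_sum
    intro T hT
    rw [Finset.mem_powerset] at hT
    rw [hsub, if_neg hT, zero_mul]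
  rw [hz (insert u S) (fun T => K T), hz S (fun T => K T),
    hz S (fun T => K (insert u T))]
  rw [Finset.powerset_insert, Finset.sum_union, Finset.sum_image, Finset.mul_sum,
    Finset.mul_sum, ← Finset.sum_add_distrib, ← Finset.sum_add_distrib]
  · apply Finset.sum_congr rfl
    intro T hT
    rw [Finset.mem_powerset] at hT
    have huT : u ∉ T := fun h => hu (hT h)
    have hc : T.card ≤ S.card := Finset.card_le_card hT
    rw [hsub (insert u S) T, hsub (insert u S) (insert u T), hsub S T,
      if_pos hT, if_pos (hT.trans (Finset.subset_insert u S)),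
      if_pos (Finset.insert_subset_insert u hT),
      Finset.card_insert_of_notMem hu, Finset.card_insert_of_notMem huT]
    have h1 : S.card + 1 - T.card = (S.card - T.card) + 1 := by omega
    have h2 : S.card + 1 - (T.card + 1) = S.card - T.card := by omega
    rw [h1, h2]
    have hq : 0 ≤ 1 - p := by linarith
    have e1 : ENNReal.ofReal ((1 - p) ^ T.card * p ^ (S.card - T.card + 1))
        = ENNReal.ofReal p * ENNReal.ofReal ((1 - p) ^ T.card * p ^ (S.card - T.card)) := by
      rw [← ENNReal.ofReal_mul hp0]
      ring_nf
    have e2 : ENNReal.ofReal ((1 - p) ^ (T.card + 1) * p ^ (S.card - T.card))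
        = ENNReal.ofReal (1 - p) * ENNReal.ofReal ((1 - p) ^ T.card * p ^ (S.card - T.card)) := by
      rw [← ENNReal.ofReal_mul hq]
      ring_nf
    rw [e1, e2]
    ring
  · intro T₁ hT₁ T₂ hT₂ h
    rw [Finset.mem_coe, Finset.mem_powerset] at hT₁ hT₂
    have h₁ : u ∉ T₁ := fun h' => hu (hT₁ h')
    have h₂ : u ∉ T₂ := fun h' => hu (hT₂ h')
    rw [← Finset.erase_insert h₁, ← Finset.erase_insert h₂, h]
  · rw [Finset.disjoint_left]
    intro T hT hT'
    rw [Finset.mem_powerset] at hT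
    rw [Finset.mem_image] at hT'
    obtain ⟨T', _, rfl⟩ := hT'
    exact hu (hT (Finset.mem_insert_self u T'))
end

section
/- Let U and F be nonempty finite types with f := |F| ≥ 2, and set α := 1/f and p := 1/(f−1). Let S : Finset U. Let G : Finset U → (U → F) → (U → F) satisfy: (i) for every T, h and every q ∈ T, G T h q = h q; and (ii) for every T, G T h = G T h' whenever h and h' agree on T. Draw T from the p-subsampling distribution applied to S and, independently, draw h uniformly at random from all functions U → F, and declare the answer for a query q to be positive iff h q = G T h q. Then for every q ∉ S, the probability that the answer is positive equals α (false positive probability), and for every q ∈ S, the probability that the answer is negative equals p·(1 − 1/f) = α (false negative probability). -/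
open scoped ENNReal Classical

section Aux

variable {U F : Type*} [Fintype U] [DecidableEq U] [Fintype F]

/-- Functions satisfying the constraint at `q`, paired with a free value at `q`,
are in bijection with all functions. -/
noncomputable def constraintEquiv (G : Finset U → (U → F) → (U → F)) (T : Finset U) (q : U)
    (hq : q ∉ T)
    (hGloc : ∀ (T : Finset U) (h h' : U → F), (∀ x ∈ T, h x = h' x) → G T h = G T h') :
    {h : U → F // h q = G T h q} × F ≃ (U → F) where
  toFun x := Function.update x.1.1 q x.2
  invFun g :=
    (⟨Function.update g q (G T g q), by
      have hGg : G T (Function.update g q (G T g q)) = G T g :=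
        hGloc T _ _ (fun x hx => Function.update_of_ne (by rintro rfl; exact hq hx) _ _)
      rw [hGg, Function.update_self]⟩, g q)
  left_inv := by
    rintro ⟨⟨h, hh⟩, c⟩
    have hG : G T (Function.update h q c) = G T h :=
      hGloc T _ _ (fun x hx => Function.update_of_ne (by rintro rfl; exact hq hx) _ _)
    refine Prod.ext (Subtype.ext ?_) ?_
    · simp only [hG, Function.update_idem, ← hh]
      exact Function.update_eq_self q h
    · exact Function.update_self q c h
  right_inv g := by
    simp only [Function.update_idem, Function.update_self]
    exact Function.update_eq_self q g

lemma card_constraint (G : Finset U → (U → F) → (U → F)) (T : Finset U) (q : U)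
    (hq : q ∉ T)
    (hGloc : ∀ (T : Finset U) (h h' : U → F), (∀ x ∈ T, h x = h' x) → G T h = G T h') :
    Fintype.card {h : U → F | h q = G T h q} * Fintype.card F = Fintype.card (U → F) := by
  classical
  have := Fintype.card_congr (constraintEquiv G T q hq hGloc)
  rw [Fintype.card_prod] at this
  convert this using 2
  exact Fintype.card_congr (Equiv.refl _)

variable [Nonempty U] [Nonempty F]

lemma measure_pos (G : Finset U → (U → F) → (U → F)) (T : Finset U) (q : U)
    (hq : q ∉ T)
    (hGloc : ∀ (T : Finset U) (h h' : U → F), (∀ x ∈ T, h x = h' x) → G T h = G T h') :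
    (PMF.uniformOfFintype (U → F)).toOuterMeasure {h : U → F | h q = G T h q}
      = ((Fintype.card F : ℝ≥0∞))⁻¹ := by
  rw [PMF.toOuterMeasure_uniformOfFintype_apply]
  have hcard := card_constraint G T q hq hGloc
  have hcs0 : Fintype.card {h : U → F | h q = G T h q} ≠ 0 := by
    intro h0
    have h2 := hcard
    rw [h0, zero_mul] at h2
    exact Fintype.card_ne_zero h2.symm
  rw [← hcard, Nat.cast_mul]
  nth_rewrite 1 [← mul_one ((Fintype.card {h : U → F | h q = G T h q} : ℝ≥0∞))]
  rw [ENNReal.mul_div_mul_left _ _ (by exact_mod_cast hcs0) (by simp)]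
  simp [ENNReal.div_eq_inv_mul]

lemma measure_neg (G : Finset U → (U → F) → (U → F)) (T : Finset U) (q : U)
    (hq : q ∉ T)
    (hGloc : ∀ (T : Finset U) (h h' : U → F), (∀ x ∈ T, h x = h' x) → G T h = G T h') :
    (PMF.uniformOfFintype (U → F)).toOuterMeasure {h : U → F | ¬ h q = G T h q}
      = ((Fintype.card F - 1 : ℕ) : ℝ≥0∞) / (Fintype.card F : ℝ≥0∞) := by
  rw [PMF.toOuterMeasure_uniformOfFintype_apply]
  have hcard := card_constraint G T q hq hGloc
  have hcs0 : Fintype.card {h : U → F | h q = G T h q} ≠ 0 := by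
    intro h0
    have h2 := hcard
    rw [h0, zero_mul] at h2
    exact Fintype.card_ne_zero h2.symm
  have e : {h : U → F | ¬ h q = G T h q} = ({h : U → F | h q = G T h q}ᶜ : Set (U → F)) := rfl
  have main : ((Fintype.card (U → F) - Fintype.card {h : U → F | h q = G T h q} : ℕ) : ℝ≥0∞)
      / ((Fintype.card (U → F) : ℕ) : ℝ≥0∞)
      = ((Fintype.card F - 1 : ℕ) : ℝ≥0∞) / (Fintype.card F : ℝ≥0∞) := by
    rw [← hcard]
    rw [show Fintype.card {h : U → F | h q = G T h q} * Fintype.card F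
          - Fintype.card {h : U → F | h q = G T h q}
        = Fintype.card {h : U → F | h q = G T h q} * (Fintype.card F - 1) by
      rw [Nat.mul_sub, mul_one]]
    rw [Nat.cast_mul, Nat.cast_mul]
    rw [ENNReal.mul_div_mul_left _ _ (by exact_mod_cast hcs0) (by simp)]
  have h2 : Fintype.card {h : U → F | ¬ h q = G T h q}
      = Fintype.card (U → F) - Fintype.card {h : U → F | h q = G T h q} :=
    (Fintype.card_congr (Equiv.setCongr e)).trans (Fintype.card_compl_set _)
  refine Eq.trans ?_ main
  congr 1
  · norm_cast

end Aux

theorem dpset_false_positive_and_false_negative_rates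
    {U F : Type*} [Fintype U] [DecidableEq U] [Nonempty U] [Fintype F] [Nonempty F]
    (f : ℕ) (hf : f = Fintype.card F) (hf2 : 2 ≤ f)
    (α p : ℝ) (hα : α = 1 / (f : ℝ)) (hp : p = 1 / ((f : ℝ) - 1))
    (S : Finset U)
    (G : Finset U → (U → F) → (U → F))
    (hGmem : ∀ (T : Finset U) (h : U → F), ∀ q ∈ T, G T h q = h q)
    (hGloc : ∀ (T : Finset U) (h h' : U → F), (∀ x ∈ T, h x = h' x) → G T h = G T h')
    (sub : Finset U → PMF (Finset U)) (hsub : IsSubsample p sub)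
    (joint : PMF (Finset U × (U → F)))
    (hjoint : joint = (sub S).bind
      (fun T => (PMF.uniformOfFintype (U → F)).map (fun h => (T, h)))) :
    (∀ q ∉ S,
        joint.toOuterMeasure {y : Finset U × (U → F) | y.2 q = G y.1 y.2 q} =
          ENNReal.ofReal α) ∧
    (∀ q ∈ S,
        joint.toOuterMeasure {y : Finset U × (U → F) | y.2 q ≠ G y.1 y.2 q} =
          ENNReal.ofReal (p * (1 - 1 / (f : ℝ)))) ∧
    p * (1 - 1 / (f : ℝ)) = α := by
  classical
  have hfR : (2 : ℝ) ≤ (f : ℝ) := by exact_mod_cast hf2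
  have hf0 : (0 : ℝ) < f := by linarith
  have hfm1 : (0 : ℝ) < (f : ℝ) - 1 := by linarith
  have hp0 : 0 ≤ p := by rw [hp]; positivity
  have hfinal : p * (1 - 1 / (f : ℝ)) = α := by
    rw [hp, hα]
    field_simp
  -- ENNReal versions of the key constants
  have hαE : ENNReal.ofReal α = ((Fintype.card F : ℝ≥0∞))⁻¹ := by
    rw [hα, hf, one_div, ENNReal.ofReal_inv_of_pos (by rw [hf] at hf0; exact_mod_cast hf0),
      ENNReal.ofReal_natCast]
  have hcE : ENNReal.ofReal (1 - 1 / (f : ℝ))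
      = ((Fintype.card F - 1 : ℕ) : ℝ≥0∞) / (Fintype.card F : ℝ≥0∞) := by
    have h1 : 1 - 1 / (f : ℝ) = ((f - 1 : ℕ) : ℝ) / (f : ℝ) := by
      rw [Nat.cast_sub (by omega), Nat.cast_one]
      field_simp
    rw [h1, ENNReal.ofReal_div_of_pos hf0, ENNReal.ofReal_natCast, ENNReal.ofReal_natCast, hf]
  refine ⟨?_, ?_, hfinal⟩
  · -- false positive
    intro q hq
    rw [hjoint, PMF.toOuterMeasure_bind_apply]
    have key : ∀ T : Finset U,
        sub S T * ((PMF.uniformOfFintype (U → F)).map (fun h => (T, h))).toOuterMeasure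
          {y : Finset U × (U → F) | y.2 q = G y.1 y.2 q}
        = sub S T * ENNReal.ofReal α := by
      intro T
      by_cases hTS : T ⊆ S
      · have hqT : q ∉ T := fun hmem => hq (hTS hmem)
        congr 1
        rw [PMF.toOuterMeasure_map_apply]
        have hpre : ((fun h : U → F => (T, h)) ⁻¹'
            {y : Finset U × (U → F) | y.2 q = G y.1 y.2 q})
            = {h : U → F | h q = G T h q} := rfl
        rw [hpre, measure_pos G T q hqT hGloc, hαE]
      · have h0 : sub S T = 0 := by rw [hsub S T]; simp [hTS]
        rw [h0, zero_mul, zero_mul]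
    rw [tsum_congr key, ENNReal.tsum_mul_right, (sub S).tsum_coe, one_mul]
  · -- false negative
    intro q hq
    rw [hjoint, PMF.toOuterMeasure_bind_apply]
    have hcardS : S.card = (S.erase q).card + 1 := by
      rw [Finset.card_erase_of_mem hq]
      have := Finset.card_pos.mpr ⟨q, hq⟩
      omega
    have key : ∀ T : Finset U,
        sub S T * ((PMF.uniformOfFintype (U → F)).map (fun h => (T, h))).toOuterMeasure
          {y : Finset U × (U → F) | y.2 q ≠ G y.1 y.2 q}
        = ENNReal.ofReal (1 - 1 / (f : ℝ)) * (ENNReal.ofReal p * sub (S.erase q) T) := by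
      intro T
      rw [PMF.toOuterMeasure_map_apply]
      by_cases hqT : q ∈ T
      · -- the event is empty
        have hpre : ((fun h : U → F => (T, h)) ⁻¹'
            {y : Finset U × (U → F) | y.2 q ≠ G y.1 y.2 q}) = ∅ := by
          ext h
          simp [hGmem T h q hqT]
        have h0 : sub (S.erase q) T = 0 := by
          rw [hsub, if_neg]
          intro hsub'
          exact (Finset.mem_erase.mp (hsub' hqT)).1 rfl
        rw [hpre, h0]
        simp [PMF.toOuterMeasure_apply]
      · have hpre : ((fun h : U → F => (T, h)) ⁻¹'
            {y : Finset U × (U → F) | y.2 q ≠ G y.1 y.2 q})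
            = {h : U → F | ¬ h q = G T h q} := rfl
        rw [hpre, measure_neg G T q hqT hGloc, ← hcE]
        by_cases hTS : T ⊆ S
        · have hTS' : T ⊆ S.erase q := fun x hx =>
            Finset.mem_erase.mpr ⟨fun hxq => hqT (hxq ▸ hx), hTS hx⟩
          have hsplit : sub S T = ENNReal.ofReal p * sub (S.erase q) T := by
            rw [hsub S T, hsub (S.erase q) T, if_pos hTS, if_pos hTS']
            have hcards : S.card - T.card = ((S.erase q).card - T.card) + 1 := by
              have hTle : T.card ≤ (S.erase q).card := Finset.card_le_card hTS'
              omega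
            rw [hcards, ← ENNReal.ofReal_mul hp0]
            congr 1
            ring
          rw [hsplit]; ring
        · have hTS' : ¬ T ⊆ S.erase q := fun hc => hTS (hc.trans (Finset.erase_subset q S))
          have h0 : sub S T = 0 := by rw [hsub]; simp [hTS]
          have h0' : sub (S.erase q) T = 0 := by rw [hsub]; simp [hTS']
          rw [h0, h0']; simp
    have hc0 : (0:ℝ) ≤ 1 - 1 / (f : ℝ) := by
      have h1 : 1 / (f : ℝ) ≤ 1 := by rw [div_le_one hf0]; linarith
      linarith
    rw [tsum_congr key, ENNReal.tsum_mul_left, ENNReal.tsum_mul_left,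
      (sub (S.erase q)).tsum_coe, mul_one, ← ENNReal.ofReal_mul hc0,
      mul_comm (1 - 1 / (f : ℝ)) p]
end
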